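/- Let ℓ ≥ 1, p ≥ 0 and w ≥ p be integers, set λ = −w(w+2ℓ−1) + p(p+ℓ−1), and define h : (0,1) → ℝ by h(y) = y^p · Σ_{j=0}^{w−p} ((p−w)_j·(2ℓ+p+w−1)_j)/((2p+ℓ)_j · j!) · y^j. Then for all y ∈ (0,1): y(1−y)·h″(y) + ℓ(1−2y)·h′(y) − p(p+ℓ−1)·((1−y)/y)·h(y) = λ·h(y). (These functions, normalized so that h(1) = 1, are precisely the scalar functions associated with the irreducible spherical functions of SO(2ℓ+1) whose SO(2ℓ)-type has highest weight (p,…,p,±p).) -/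

import Mathlib

namespace Stmt19

/-- The scalar function `h(y) = y^p · ₂F₁(p-w, 2ℓ+p+w-1; 2p+ℓ; y)`
(a terminating hypergeometric series). -/
noncomputable def hfun (ℓ p w : ℕ) : ℝ → ℝ :=
  fun y => y^p *
    ∑ j ∈ Finset.range (w - p + 1),
      ((ascPochhammer ℝ j).eval ((p:ℝ) - (w:ℝ)) *
          (ascPochhammer ℝ j).eval (2*(ℓ:ℝ) + (p:ℝ) + (w:ℝ) - 1)) /
        ((ascPochhammer ℝ j).eval (2*(p:ℝ) + (ℓ:ℝ)) * (Nat.factorial j : ℝ)) * y^j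

/-- Coefficients of the hypergeometric series. -/
noncomputable def cc (ℓ p w j : ℕ) : ℝ :=
  ((ascPochhammer ℝ j).eval ((p:ℝ) - (w:ℝ)) *
      (ascPochhammer ℝ j).eval (2*(ℓ:ℝ) + (p:ℝ) + (w:ℝ) - 1)) /
    ((ascPochhammer ℝ j).eval (2*(p:ℝ) + (ℓ:ℝ)) * (Nat.factorial j : ℝ))

lemma hfun_eq (ℓ p w : ℕ) :
    hfun ℓ p w = fun y => ∑ j ∈ Finset.range (w - p + 1), cc ℓ p w j * y ^ (p + j) := by
  funext y
  unfold hfun cc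
  rw [Finset.mul_sum]
  refine Finset.sum_congr rfl fun j _ => ?_
  rw [pow_add]; ring

lemma deriv1 (ℓ p w : ℕ) :
    deriv (hfun ℓ p w) =
      fun y => ∑ j ∈ Finset.range (w - p + 1),
        cc ℓ p w j * (((p + j : ℕ) : ℝ) * y ^ (p + j - 1)) := by
  funext y
  rw [hfun_eq]
  rw [deriv_fun_sum (fun j _ => by fun_prop)]
  refine Finset.sum_congr rfl fun j _ => ?_
  rw [deriv_const_mul_field, deriv_pow_field]

lemma deriv2 (ℓ p w : ℕ) :
    deriv (deriv (hfun ℓ p w)) =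
      fun y => ∑ j ∈ Finset.range (w - p + 1),
        cc ℓ p w j * (((p + j : ℕ) : ℝ) * (((p + j - 1 : ℕ) : ℝ) * y ^ (p + j - 1 - 1))) := by
  funext y
  rw [deriv1]
  rw [deriv_fun_sum (fun j _ => by fun_prop)]
  refine Finset.sum_congr rfl fun j _ => ?_
  rw [deriv_const_mul_field, deriv_const_mul_field, deriv_pow_field]

lemma cc_rec (ℓ p w : ℕ) (hℓ : 1 ≤ ℓ) (j : ℕ) :
    cc ℓ p w (j + 1) * (((j : ℝ) + 1) * (2 * (p : ℝ) + (ℓ : ℝ) + j)) =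
      cc ℓ p w j * (((p : ℝ) - w + j) * (2 * (ℓ : ℝ) + p + w - 1 + j)) := by
  unfold cc
  have hd : (0 : ℝ) < 2 * (p : ℝ) + (ℓ : ℝ) := by
    have : (1 : ℝ) ≤ (ℓ : ℝ) := by exact_mod_cast hℓ
    positivity
  have h1 : (0 : ℝ) < (ascPochhammer ℝ j).eval (2 * (p : ℝ) + (ℓ : ℝ)) :=
    ascPochhammer_pos j _ hd
  have h2 : ((Nat.factorial j : ℝ)) ≠ 0 := by
    exact_mod_cast (Nat.factorial_pos j).ne'
  have h3 : (2 * (p : ℝ) + (ℓ : ℝ) + j) ≠ 0 := by positivity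
  have h4 : ((j : ℝ) + 1) ≠ 0 := by positivity
  rw [ascPochhammer_succ_eval, ascPochhammer_succ_eval, ascPochhammer_succ_eval,
    Nat.factorial_succ]
  push_cast
  field_simp

lemma aux1 (y : ℝ) (n : ℕ) : y * ((n : ℝ) * y ^ (n - 1)) = (n : ℝ) * y ^ n := by
  cases n with
  | zero => simp
  | succ m => rw [Nat.succ_sub_one, pow_succ]; ring

lemma aux2 (y : ℝ) (n : ℕ) :
    y ^ 2 * ((n : ℝ) * (((n - 1 : ℕ) : ℝ) * y ^ (n - 1 - 1))) =
      (n : ℝ) * ((n : ℝ) - 1) * y ^ n := by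
  match n with
  | 0 => simp
  | 1 => simp
  | (m + 2) =>
    have e2 : m + 2 - 1 - 1 = m := rfl
    have e1 : m + 2 - 1 = m + 1 := rfl
    rw [e2, e1]
    push_cast
    rw [pow_succ, pow_succ]
    ring

/-- With `λ = -w(w+2ℓ-1) + p(p+ℓ-1)`, the function `h` satisfies
`y(1-y)h'' + ℓ(1-2y)h' - p(p+ℓ-1)((1-y)/y)h = λh` on `(0,1)`. -/
theorem scalar_spherical_ode (ℓ p w : ℕ) (hℓ : 1 ≤ ℓ) (hw : p ≤ w) :
    ∀ y ∈ Set.Ioo (0:ℝ) 1,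
      y*(1-y) * deriv (deriv (hfun ℓ p w)) y + (ℓ:ℝ)*(1-2*y) * deriv (hfun ℓ p w) y
          - (p:ℝ)*((p:ℝ)+(ℓ:ℝ)-1)*((1-y)/y) * hfun ℓ p w y
        = (-(w:ℝ)*((w:ℝ)+2*(ℓ:ℝ)-1) + (p:ℝ)*((p:ℝ)+(ℓ:ℝ)-1)) * hfun ℓ p w y := by
  intro y hy
  obtain ⟨hy0, _⟩ := hy
  have hyne : y ≠ 0 := ne_of_gt hy0
  set N := w - p with hNdef
  rw [deriv2, deriv1, hfun_eq]
  simp only []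
  set L : ℝ := -(w:ℝ)*((w:ℝ)+2*(ℓ:ℝ)-1) + (p:ℝ)*((p:ℝ)+(ℓ:ℝ)-1) with hL
  set S0 := ∑ j ∈ Finset.range (N + 1), cc ℓ p w j * y ^ (p + j) with hS0
  set S1 := ∑ j ∈ Finset.range (N + 1),
      cc ℓ p w j * (((p + j : ℕ) : ℝ) * y ^ (p + j - 1)) with hS1
  set S2 := ∑ j ∈ Finset.range (N + 1),
      cc ℓ p w j * (((p + j : ℕ) : ℝ) * (((p + j - 1 : ℕ) : ℝ) * y ^ (p + j - 1 - 1))) with hS2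
  set A := ∑ j ∈ Finset.range (N + 1),
      cc ℓ p w j * (((p : ℝ) + j) * y ^ (p + j)) with hA
  set B := ∑ j ∈ Finset.range (N + 1),
      cc ℓ p w j * ((((p : ℝ) + j) * (((p : ℝ) + j) - 1)) * y ^ (p + j)) with hB
  have E1 : y * S1 = A := by
    rw [hS1, hA, Finset.mul_sum]
    refine Finset.sum_congr rfl fun j _ => ?_
    have h := aux1 y (p + j)
    push_cast at h ⊢
    linear_combination cc ℓ p w j * h
  have E2 : y ^ 2 * S2 = B := by
    rw [hS2, hB, Finset.mul_sum]
    refine Finset.sum_congr rfl fun j _ => ?_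
    have h := aux2 y (p + j)
    push_cast at h ⊢
    linear_combination cc ℓ p w j * h
  -- the key hypergeometric identity
  have key : (∑ j ∈ Finset.range (N + 1),
        cc ℓ p w j * (((j : ℝ)) * ((j : ℝ) + 2 * p + ℓ - 1)) * y ^ (p + j))
      + y * ∑ j ∈ Finset.range (N + 1),
        cc ℓ p w j * (((w : ℝ) - p - j) * ((w : ℝ) + p + j + 2 * ℓ - 1)) * y ^ (p + j) = 0 := by
    rw [Finset.sum_range_succ' _ N, Finset.sum_range_succ _ N]
    have hNcast : ((N : ℝ)) = (w : ℝ) - (p : ℝ) := by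
      rw [hNdef]; push_cast [Nat.cast_sub hw]; ring
    have hlast : cc ℓ p w N * (((w : ℝ) - p - N) * ((w : ℝ) + p + N + 2 * ℓ - 1)) * y ^ (p + N)
        = 0 := by
      rw [hNcast]; ring
    have hfirst : cc ℓ p w 0 * (((0 : ℕ) : ℝ) * (((0 : ℕ) : ℝ) + 2 * p + ℓ - 1)) * y ^ (p + 0)
        = 0 := by simp
    rw [hlast, hfirst, add_zero, add_zero, Finset.mul_sum, ← Finset.sum_add_distrib]
    refine Finset.sum_eq_zero fun j _ => ?_
    have hrec := cc_rec ℓ p w hℓ j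
    have hpow : y ^ (p + (j + 1)) = y ^ (p + j) * y := by
      rw [← pow_succ]; ring_nf
    rw [hpow]
    push_cast
    linear_combination (y ^ (p + j) * y) * hrec
  -- reduce to an identity in A, B, S0
  have hA' : (∑ j ∈ Finset.range (N + 1),
      cc ℓ p w j * (((j : ℝ)) * ((j : ℝ) + 2 * p + ℓ - 1)) * y ^ (p + j))
      = B + (ℓ : ℝ) * A - (p : ℝ) * ((p : ℝ) + ℓ - 1) * S0 := by
    rw [hB, hA, hS0, Finset.mul_sum, Finset.mul_sum, ← Finset.sum_add_distrib,
      ← Finset.sum_sub_distrib]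
    refine Finset.sum_congr rfl fun j _ => ?_
    ring
  have hB' : (∑ j ∈ Finset.range (N + 1),
      cc ℓ p w j * (((w : ℝ) - p - j) * ((w : ℝ) + p + j + 2 * ℓ - 1)) * y ^ (p + j))
      = -B - 2 * (ℓ : ℝ) * A + ((p : ℝ) * ((p : ℝ) + ℓ - 1) - L) * S0 := by
    rw [hB, hA, hS0, hL, Finset.mul_sum, Finset.mul_sum, ← Finset.sum_neg_distrib,
      ← Finset.sum_sub_distrib, ← Finset.sum_add_distrib]
    refine Finset.sum_congr rfl fun j _ => ?_
    ring
  rw [hA', hB'] at key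
  -- multiply the goal through by y
  refine mul_left_cancel₀ hyne ?_
  have hdiv : (p : ℝ) * ((p : ℝ) + ℓ - 1) * ((1 - y) / y) * S0 * y
      = (p : ℝ) * ((p : ℝ) + ℓ - 1) * (1 - y) * S0 := by
    field_simp
  calc y * (y * (1 - y) * S2 + (ℓ : ℝ) * (1 - 2 * y) * S1
        - (p : ℝ) * ((p : ℝ) + ℓ - 1) * ((1 - y) / y) * S0)
      = (1 - y) * (y ^ 2 * S2) + (ℓ : ℝ) * (1 - 2 * y) * (y * S1)
        - (p : ℝ) * ((p : ℝ) + ℓ - 1) * ((1 - y) / y) * S0 * y := by ring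
    _ = (1 - y) * B + (ℓ : ℝ) * (1 - 2 * y) * A
        - (p : ℝ) * ((p : ℝ) + ℓ - 1) * (1 - y) * S0 := by rw [E1, E2, hdiv]
    _ = y * (L * S0) := by linear_combination key

end Stmt19
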